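/- (Slicing lemma) Let T be a set, η an ordinal, and suppose (i) for all X', Y' ⊆ T, every surjection Y' → X' admits an injection X' → Y' (PP restricted to T), and (ii) choice holds for families indexed by well-orderable sets (AC_WO). If A, B ⊆ T × η and f : B → A is a surjection, then there exists an injection g : A → B. -/
import Mathlib


universe u

/-- Slicing lemma: from `PP↾T` and `AC_WO`, every surjection between subsets of
`T × η` (with `η` a well-ordered type, i.e. an ordinal) splits into an injection
the other way. -/
theorem slicing_lemma {T : Type u} (η : Type u) (rη : η → η → Prop)
    (hη : IsWellOrder η rη)
    (hPP : ∀ X' Y' : Set T, (∃ f : Y' → X', Function.Surjective f) →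
      ∃ g : X' → Y', Function.Injective g)
    (hACWO : ∀ (ι : Type u) (r : ι → ι → Prop), IsWellOrder ι r →
      ∀ A : ι → Type u, (∀ i, Nonempty (A i)) → Nonempty ((i : ι) → A i))
    (A B : Set (T × η)) (f : B → A) (hf : Function.Surjective f) :
    ∃ g : A → B, Function.Injective g := by
  classical
  have wf := hη.toIsWellFounded.wf
  have Sne : ∀ a : A, {e : η | ∃ s : T, ∃ h : (s, e) ∈ B, f ⟨(s, e), h⟩ = a}.Nonempty := by
    intro a
    obtain ⟨⟨⟨s, e⟩, hb⟩, hfb⟩ := hf a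
    exact ⟨e, s, hb, hfb⟩
  let eps : A → η := fun a => wf.min _ (Sne a)
  have eps_mem : ∀ a : A, ∃ s : T, ∃ h : (s, eps a) ∈ B, f ⟨(s, eps a), h⟩ = a :=
    fun a => wf.min_mem _ (Sne a)
  let X : η × η → Set T := fun i => {t | ∃ h : (t, i.2) ∈ A, eps ⟨(t, i.2), h⟩ = i.1}
  let Y : η × η → Set T := fun i => {s | ∃ h : (s, i.1) ∈ B,
    (f ⟨(s, i.1), h⟩).1.2 = i.2 ∧ eps (f ⟨(s, i.1), h⟩) = i.1}
  have hsurj : ∀ i : η × η, ∃ F : Y i → X i, Function.Surjective F := by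
    intro i
    refine ⟨fun s => ⟨(f ⟨(s.1, i.1), s.2.choose⟩).1.1, ?_⟩, ?_⟩
    · obtain ⟨h1, h2⟩ := s.2.choose_spec
      have hpe : ((f ⟨(s.1, i.1), s.2.choose⟩).1.1, i.2) = (f ⟨(s.1, i.1), s.2.choose⟩).1 :=
        Prod.ext rfl h1.symm
      refine ⟨hpe ▸ (f ⟨(s.1, i.1), s.2.choose⟩).2, ?_⟩
      rw [show (⟨((f ⟨(s.1, i.1), s.2.choose⟩).1.1, i.2), hpe ▸ (f ⟨(s.1, i.1), s.2.choose⟩).2⟩ : A)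
          = f ⟨(s.1, i.1), s.2.choose⟩ from Subtype.ext hpe]
      exact h2
    · rintro ⟨t, ha, he⟩
      obtain ⟨s, hb, hfs⟩ := eps_mem ⟨(t, i.2), ha⟩
      have hb' : (s, i.1) ∈ B := by rw [← he]; exact hb
      have hfeq : f ⟨(s, i.1), hb'⟩ = ⟨(t, i.2), ha⟩ := by
        rw [show (⟨(s, i.1), hb'⟩ : B) = ⟨(s, eps ⟨(t, i.2), ha⟩), hb⟩ from Subtype.ext (show (s, i.1) = (s, eps ⟨(t, i.2), ha⟩) by rw [he])]
        exact hfs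
      have hsY : s ∈ Y i := ⟨hb', by rw [show f ⟨(s, i.1), hb'⟩ = ⟨(t, i.2), ha⟩ from hfeq]; exact ⟨rfl, he⟩⟩
      refine ⟨⟨s, hsY⟩, ?_⟩
      apply Subtype.ext
      show (f ⟨(s, i.1), hsY.choose⟩).1.1 = t
      have hpi : f ⟨(s, i.1), hsY.choose⟩ = f ⟨(s, i.1), hb'⟩ := rfl
      rw [hpi, hfeq]
  haveI := hη
  have hwo : IsWellOrder (η × η) (Prod.Lex rη rη) := inferInstance
  obtain ⟨G⟩ := hACWO (η × η) (Prod.Lex rη rη) hwo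
    (fun i => {g : T → T // Set.InjOn g (X i) ∧ Set.MapsTo g (X i) (Y i)})
    (fun i => by
      obtain ⟨g0, hg0⟩ := hPP (X i) (Y i) (hsurj i)
      refine ⟨⟨fun t => if h : t ∈ X i then (g0 ⟨t, h⟩).1 else t, ?_, ?_⟩⟩
      · intro t ht t' ht' hgt
        simp only [dif_pos ht, dif_pos ht'] at hgt
        exact congrArg Subtype.val (hg0 (Subtype.ext hgt))
      · intro t ht
        simp only [dif_pos ht]
        exact (g0 ⟨t, ht⟩).2)
  have hXmem : ∀ a : A, a.1.1 ∈ X (eps a, a.1.2) := fun a => ⟨a.2, rfl⟩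
  let g : A → B := fun a =>
    ⟨((G (eps a, a.1.2)).1 a.1.1, eps a), ((G (eps a, a.1.2)).2.2 (hXmem a)).choose⟩
  refine ⟨g, ?_⟩
  intro a a' hgg
  have hval : (((G (eps a, a.1.2)).1 a.1.1, eps a) : T × η)
      = (((G (eps a', a'.1.2)).1 a'.1.1, eps a') : T × η) := congrArg Subtype.val hgg
  have he : eps a = eps a' := congrArg Prod.snd hval
  have hα : a.1.2 = a'.1.2 := by
    obtain ⟨hb1, hs1, -⟩ := (G (eps a, a.1.2)).2.2 (hXmem a)
    obtain ⟨hb2, hs2, -⟩ := (G (eps a', a'.1.2)).2.2 (hXmem a')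
    have hBeq : (⟨((G (eps a, a.1.2)).1 a.1.1, eps a), hb1⟩ : B)
        = ⟨((G (eps a', a'.1.2)).1 a'.1.1, eps a'), hb2⟩ := Subtype.ext hval
    rw [← hs1, ← hs2, hBeq]
  have hi : ((eps a, a.1.2) : η × η) = (eps a', a'.1.2) := Prod.ext he hα
  rw [← hi] at hval
  have ht : a.1.1 = a'.1.1 :=
    (G (eps a, a.1.2)).2.1 (hXmem a) (hi ▸ hXmem a') (congrArg Prod.fst hval)
  exact Subtype.ext (Prod.ext ht hα)
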